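/- For 1 ≤ κ ≤ m-1, at the frequency f = u/γ(κ) (where k(f) jumps from κ to κ-1), we have M(u/γ(κ)) = κ, and for any f' with u/γ(κ+1) ≤ f' < u/γ(κ), M(f') > κ. Hence M is monotonically decreasing across the jump points of k. -/

import Mathlib

/-- `k` satisfies the defining equation of `k(f)`. -/
def kSpec (m : ℕ) (γ : ℕ → ℝ) (u : ℝ) (k : ℝ → ℕ) : Prop :=
  ∀ f : ℝ, 0 < f →
    (u ≤ γ 1 * f → k f = 0) ∧
    (γ 1 * f < u → IsGreatest {j : ℕ | 1 ≤ j ∧ j ≤ m ∧ γ j * f < u} (k f))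

/-- The minimum fractional number of processors `M(f)`. -/
noncomputable def Mfun (γ : ℕ → ℝ) (u : ℝ) (k : ℝ → ℕ) (f : ℝ) : ℝ :=
  (k f : ℝ) + (u - γ (k f) * f) / ((γ (k f + 1) - γ (k f)) * f)

/-- At the jump frequency `f = u/γ(κ)` one has `M(f) = κ`, while any `f'` with
`u/γ(κ+1) ≤ f' < u/γ(κ)` satisfies `M(f') > κ`: `M` decreases across jump points. -/
theorem stmt_5 (m : ℕ) (hm : 1 ≤ m) (γ : ℕ → ℝ) (hγ0 : γ 0 = 0)
    (hmono : StrictMonoOn γ (Set.Icc 0 m))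
    (u : ℝ) (hu : 0 < u) (k : ℝ → ℕ) (hk : kSpec m γ u k)
    (κ : ℕ) (hκ1 : 1 ≤ κ) (hκm : κ ≤ m - 1) :
    Mfun γ u k (u / γ κ) = κ ∧
    ∀ f' : ℝ, u / γ (κ + 1) ≤ f' → f' < u / γ κ → Mfun γ u k f' > κ := by
  have hκm' : κ + 1 ≤ m := by omega
  have hκle : κ ≤ m := by omega
  have hmem : ∀ j : ℕ, j ≤ m → j ∈ Set.Icc 0 m := fun j hj => by simp [hj]
  have hlt : ∀ i j : ℕ, i < j → j ≤ m → γ i < γ j := fun i j hij hj =>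
    hmono (hmem i (by omega)) (hmem j hj) hij
  have hle : ∀ i j : ℕ, i ≤ j → j ≤ m → γ i ≤ γ j := fun i j hij hj =>
    hmono.monotoneOn (hmem i (by omega)) (hmem j hj) hij
  have hγκ : 0 < γ κ := hγ0 ▸ hlt 0 κ (by omega) hκle
  have hγκ1 : 0 < γ (κ + 1) := hγ0 ▸ hlt 0 (κ + 1) (by omega) hκm'
  constructor
  · set f := u / γ κ with hfdef
    have hf : 0 < f := div_pos hu hγκ
    have hfe : γ κ * f = u := by rw [hfdef]; field_simp
    obtain ⟨h0, hG⟩ := hk f hf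
    have hkf : k f = κ - 1 := by
      rcases eq_or_lt_of_le hκ1 with h1 | h2
      · have : u ≤ γ 1 * f := by rw [← h1] at hfe; rw [hfe]
        rw [h0 this]; omega
      · -- κ ≥ 2
        have h1lt : γ 1 * f < u := by
          rw [← hfe]
          exact mul_lt_mul_of_pos_right (hlt 1 κ h2 hκle) hf
        obtain ⟨⟨hk1, hkm, hklt⟩, hub⟩ := hG h1lt
        have hub' : κ - 1 ≤ k f := by
          apply hub
          refine ⟨by omega, by omega, ?_⟩
          rw [← hfe]
          exact mul_lt_mul_of_pos_right (hlt (κ - 1) κ (by omega) hκle) hf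
        have hlt2 : k f < κ := by
          by_contra hc
          push_neg at hc
          have : γ κ ≤ γ (k f) := hle κ (k f) hc hkm
          have : u ≤ γ (k f) * f := by
            rw [← hfe]; exact mul_le_mul_of_nonneg_right this hf.le
          linarith
        omega
    have hsucc : k f + 1 = κ := by omega
    have hγd : γ (κ - 1) < γ κ := hlt (κ - 1) κ (by omega) hκle
    rw [Mfun, hkf]
    have hs2 : κ - 1 + 1 = κ := by omega
    rw [hs2, ← hfe]
    have hne : (γ κ - γ (κ - 1)) * f ≠ 0 := mul_ne_zero (by linarith) hf.ne'
    rw [Nat.cast_sub hκ1]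
    have hne2 : γ κ - γ (κ - 1) ≠ 0 := sub_ne_zero.mpr hγd.ne'
    field_simp
    ring
  · intro f' hlo hhi
    have hf' : 0 < f' := lt_of_lt_of_le (div_pos hu hγκ1) hlo
    have hκf' : γ κ * f' < u := by
      rw [lt_div_iff₀ hγκ] at hhi; linarith [hhi]
    have hκ1f' : u ≤ γ (κ + 1) * f' := by
      rw [div_le_iff₀ hγκ1] at hlo; linarith [hlo]
    obtain ⟨h0, hG⟩ := hk f' hf'
    have h1lt : γ 1 * f' < u :=
      lt_of_le_of_lt (mul_le_mul_of_nonneg_right (hle 1 κ hκ1 hκle) hf'.le) hκf'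
    obtain ⟨⟨hk1, hkm, hklt⟩, hub⟩ := hG h1lt
    have hgeq : κ ≤ k f' := hub ⟨hκ1, hκle, hκf'⟩
    have hleq : k f' ≤ κ := by
      by_contra hc
      push_neg at hc
      have : γ (κ + 1) ≤ γ (k f') := hle (κ + 1) (k f') hc hkm
      have : u ≤ γ (k f') * f' := le_trans hκ1f' (mul_le_mul_of_nonneg_right this hf'.le)
      linarith
    have hkf : k f' = κ := le_antisymm hleq hgeq
    rw [Mfun, hkf]
    have hd : γ κ < γ (κ + 1) := hlt κ (κ + 1) (by omega) hκm'
    have hpos : 0 < (u - γ κ * f') / ((γ (κ + 1) - γ κ) * f') := by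
      exact div_pos (by linarith) (mul_pos (by linarith) hf')
    linarith
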